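/- Let K be the Kirchhoff matrix of a superport network with m > p: the n×n matrix with K_{ij} = −c_{ij} for i ≠ j and K_{ii} = Σ_{k=1}^n c_{ik}. Let K̃ be the matrix obtained from K by removing row n and column n; then K̃ is invertible. Let F := K̃^{−1} (rows and columns indexed by 1,…,n−1); let G be obtained from F by subtracting, for each non-root boundary vertex k with root(k) ≠ n, the column root(k) from the column k; let H be obtained from G by subtracting, for each non-root boundary vertex k with root(k) ≠ n, the row root(k) from the row k; and let H' be obtained from H by deleting the row and the column indexed by every root r ≠ n and by every interior vertex v ≠ n. Then H' is invertible and the response matrix L of the superport network equals H'^{−1}. -/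

import Mathlib

open Finset BigOperators
open scoped Classical

namespace Superport

/-- A superport network: a finite connected simple graph on `Fin n` with conductances `c`
and `p` nonempty pairwise disjoint superports `A 0, …, A (p-1)` occupying the initial
segment of the vertices, ordered consecutively. -/
structure Network where
  n : ℕ
  p : ℕ
  graph : SimpleGraph (Fin n)
  c : Fin n → Fin n → ℝ
  A : Fin p → Finset (Fin n)
  p_pos : 0 < p
  connected : graph.Connected
  c_symm : ∀ k l, c k l = c l k
  c_pos : ∀ k l, graph.Adj k l → 0 < c k l
  c_zero : ∀ k l, ¬ graph.Adj k l → c k l = 0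
  A_nonempty : ∀ i, (A i).Nonempty
  A_disjoint : ∀ i j, i ≠ j → Disjoint (A i) (A j)
  A_ordered : ∀ i j u v, i < j → u ∈ A i → v ∈ A j → u < v
  boundary_initial : ∀ v : Fin n, (∃ i, v ∈ A i) ↔ (v : ℕ) < ∑ i, (A i).card

namespace Network

variable (N : Network)

/-- The set of boundary vertices. -/
def M : Finset (Fin N.n) := Finset.univ.biUnion N.A

/-- The number of boundary vertices. -/
def m : ℕ := N.M.card

theorem mem_M_iff {v : Fin N.n} : v ∈ N.M ↔ ∃ i, v ∈ N.A i := by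
  simp [M, Finset.mem_biUnion]

/-- The root of the superport of a boundary vertex `v` (the vertex of maximal number
in the superport containing `v`); for interior `v` we set `root v = v`. -/
noncomputable def root (v : Fin N.n) : Fin N.n :=
  if h : ∃ i, v ∈ N.A i then (N.A h.choose).max' ⟨v, h.choose_spec⟩ else v

/-- The index of the last superport. -/
def lastPort : Fin N.p := ⟨N.p - 1, Nat.sub_lt N.p_pos Nat.one_pos⟩

theorem M_nonempty : N.M.Nonempty := by
  obtain ⟨v, hv⟩ := N.A_nonempty N.lastPort
  exact ⟨v, N.mem_M_iff.mpr ⟨N.lastPort, hv⟩⟩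

theorem root_mem {v : Fin N.n} (hv : v ∈ N.M) : N.root v ∈ N.M := by
  have h : ∃ i, v ∈ N.A i := N.mem_M_iff.mp hv
  rw [root, dif_pos h]
  exact N.mem_M_iff.mpr ⟨h.choose, (N.A h.choose).max'_mem _⟩

theorem root_eq_self_of_max {v : Fin N.n} (hv : v ∈ N.M) (hmax : ∀ u ∈ N.M, u ≤ v) :
    N.root v = v := by
  have h : ∃ i, v ∈ N.A i := N.mem_M_iff.mp hv
  rw [root, dif_pos h]
  exact le_antisymm (hmax _ (N.mem_M_iff.mpr ⟨h.choose, (N.A h.choose).max'_mem _⟩))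
    (Finset.le_max' _ _ h.choose_spec)

/-- Axioms (C), (I), (P), (B) for voltages `U`, currents `I`, and prescribed voltage
differences `ΔU` (only the values of `ΔU` at non-root boundary vertices are relevant). -/
def Axioms (ΔU U : Fin N.n → ℝ) (I : Fin N.n → Fin N.n → ℝ) : Prop :=
  (∀ k l, I k l = N.c k l * (U k - U l)) ∧
  (∀ k, k ∉ N.M → ∑ l, I k l = 0) ∧
  (∀ i : Fin N.p, i ≠ N.lastPort → ∑ k ∈ N.A i, ∑ l, I k l = 0) ∧
  (∀ k, k ∈ N.M → N.root k ≠ k → U k - U (N.root k) = ΔU k)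

/-- The weight of a subgraph: the product of the conductances of its edges. -/
noncomputable def weight (H : SimpleGraph (Fin N.n)) : ℝ :=
  ∏ e ∈ (Set.toFinite H.edgeSet).toFinset, Sym2.lift ⟨N.c, N.c_symm⟩ e

/-- The number of edges of a subgraph. -/
noncomputable def edgeCount (H : SimpleGraph (Fin N.n)) : ℕ :=
  (Set.toFinite H.edgeSet).toFinset.card

/-- Two vertices lie in a common superport. -/
def samePort (u v : Fin N.n) : Prop := ∃ i, u ∈ N.A i ∧ v ∈ N.A i

/-- The `X`-equivalence: two boundary vertices not in `X` are equivalent iff they lie in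
the same superport; each interior vertex and each vertex of `X` forms a singleton class.
For `X = ∅` this is the equivalence relation `∼`. -/
def xSetoid (X : Set (Fin N.n)) : Setoid (Fin N.n) where
  r u v := u = v ∨ (u ∉ X ∧ v ∉ X ∧ N.samePort u v)
  iseqv := by
    constructor
    · intro u; exact Or.inl rfl
    · rintro u v (rfl | ⟨hu, hv, i, hui, hvi⟩)
      · exact Or.inl rfl
      · exact Or.inr ⟨hv, hu, i, hvi, hui⟩
    · rintro u v w huv hvw
      rcases huv with rfl | ⟨hu, hv, i, hui, hvi⟩
      · exact hvw
      rcases hvw with rfl | ⟨hv', hw, j, hvj, hwj⟩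
      · exact Or.inr ⟨hu, hv, i, hui, hvi⟩
      · have hij : i = j := by
          by_contra hij
          exact (Finset.disjoint_left.mp (N.A_disjoint i j hij) hvi) hvj
        exact Or.inr ⟨hu, hw, i, hui, hij ▸ hwj⟩

/-- The quotient of a graph `H` by an equivalence relation `s`: classes `a ≠ b` are
adjacent iff some representatives are adjacent in `H`. -/
def quotGraph (H : SimpleGraph (Fin N.n)) (s : Setoid (Fin N.n)) :
    SimpleGraph (Quotient s) where
  Adj a b := a ≠ b ∧ ∃ u v, H.Adj u v ∧ Quotient.mk s u = a ∧ Quotient.mk s v = b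
  symm := by
    refine ⟨?_⟩
    rintro a b ⟨hab, u, v, huv, hu, hv⟩
    exact ⟨hab.symm, v, u, huv.symm, hv, hu⟩
  loopless := by
    refine ⟨?_⟩
    rintro a ⟨hab, -⟩
    exact hab rfl

/-- A spanning forest of the network. -/
def IsSpanningForest (H : SimpleGraph (Fin N.n)) : Prop := H ≤ N.graph ∧ H.IsAcyclic

/-- A spanning forest becomes a spanning tree in the quotient by the `X`-equivalence
(in the multigraph sense): the quotient is connected and the number of edges of the
forest is one less than the number of equivalence classes.  For `X = {i}` this is
"valid relative to the vertex `i`"; for `X = ∅` this is "valid". -/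
def IsValidRel (X : Set (Fin N.n)) (H : SimpleGraph (Fin N.n)) : Prop :=
  N.IsSpanningForest H ∧ (N.quotGraph H (N.xSetoid X)).Connected ∧
    N.edgeCount H + 1 = Nat.card (Quotient (N.xSetoid X))

/-- A valid forest: a spanning forest which becomes a spanning tree in the quotient
by the equivalence `∼`. -/
def IsValidForest (H : SimpleGraph (Fin N.n)) : Prop := N.IsValidRel ∅ H

/-- The sign `sgn(H, i, j)` of a spanning forest `H` with respect to vertices `i, j`. -/
noncomputable def sgnIJ (H : SimpleGraph (Fin N.n)) (i j : Fin N.n) : ℝ :=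
  if i = j ∨ ¬ (N.quotGraph H (N.xSetoid {i, j})).Reachable
      (Quotient.mk (N.xSetoid {i, j}) i) (Quotient.mk (N.xSetoid {i, j}) j)
  then 1 else -1

/-- The type of non-root boundary vertices. -/
abbrev NonRoot := {v : Fin N.n // v ∈ N.M ∧ N.root v ≠ v}

/-- The type of boundary vertices. -/
abbrev Bdry := {v : Fin N.n // v ∈ N.M}

/-- `L` is the response matrix of the superport network: for any admissible voltages and
currents, the incoming currents at the non-root boundary vertices are obtained from the
prescribed voltage differences by multiplication by `L`. -/
def IsResponse (L : Matrix N.NonRoot N.NonRoot ℝ) : Prop :=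
  ∀ (ΔU U : Fin N.n → ℝ) (I : Fin N.n → Fin N.n → ℝ), N.Axioms ΔU U I →
    ∀ x : N.NonRoot, (∑ l, I x.1 l) = ∑ y : N.NonRoot, L x y * ΔU y.1

/-- `C` is the response matrix of the electrical network obtained by unifying all the
superports: same graph and conductances, boundary vertices `M`; axioms (C) and (I). -/
def IsElecResponse (C : Matrix N.Bdry N.Bdry ℝ) : Prop :=
  ∀ (Ub : N.Bdry → ℝ) (U : Fin N.n → ℝ) (I : Fin N.n → Fin N.n → ℝ),
    (∀ k l, I k l = N.c k l * (U k - U l)) →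
    (∀ k, k ∉ N.M → ∑ l, I k l = 0) →
    (∀ v : N.Bdry, U v.1 = Ub v) →
    ∀ v : N.Bdry, (∑ l, I v.1 l) = ∑ u : N.Bdry, C v u * Ub u

/-- The sum of the weights of all valid forests. -/
noncomputable def validForestSum : ℝ :=
  ∑ H ∈ Finset.univ.filter (fun H => N.IsValidForest H), N.weight H

end Network
end Superport

namespace Superport
namespace Network

variable (N : Network)

theorem n_pos : 0 < N.n := N.connected.nonempty.some.pos

/-- The last vertex of the network. -/
def lastAll : Fin N.n := ⟨N.n - 1, Nat.sub_lt N.n_pos Nat.one_pos⟩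

theorem nonroot_ne_lastAll {v : Fin N.n} (hv : v ∈ N.M) (hr : N.root v ≠ v) :
    v ≠ N.lastAll := by
  intro hEq
  apply hr
  subst hEq
  apply N.root_eq_self_of_max hv
  intro u _
  have hu : (u : ℕ) < N.n := u.isLt
  exact Fin.le_def.mpr (by simp only [lastAll]; omega)

/-- The Kirchhoff matrix of the network. -/
noncomputable def Kmatrix : Matrix (Fin N.n) (Fin N.n) ℝ :=
  fun i j => if i = j then ∑ k, N.c i k else - N.c i j

/-- Vertices other than the last one. -/
abbrev VertNotLast := {v : Fin N.n // v ≠ N.lastAll}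

/-- `K̃`: the Kirchhoff matrix with the last row and column removed. -/
noncomputable def Ktilde : Matrix N.VertNotLast N.VertNotLast ℝ :=
  fun v w => N.Kmatrix v.1 w.1

/-- Step 2 of the K2L algorithm: for each non-root boundary vertex `k` with
`root k ≠` the last vertex, subtract the column `root k` from the column `k`. -/
noncomputable def stepColK (F : Matrix N.VertNotLast N.VertNotLast ℝ) :
    Matrix N.VertNotLast N.VertNotLast ℝ :=
  fun v w =>
    if h : w.1 ∈ N.M ∧ N.root w.1 ≠ w.1 ∧ N.root w.1 ≠ N.lastAll then
      F v w - F v ⟨N.root w.1, h.2.2⟩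
    else F v w

/-- Step 3 of the K2L algorithm: the same operation on rows. -/
noncomputable def stepRowK (G : Matrix N.VertNotLast N.VertNotLast ℝ) :
    Matrix N.VertNotLast N.VertNotLast ℝ :=
  fun v w =>
    if h : v.1 ∈ N.M ∧ N.root v.1 ≠ v.1 ∧ N.root v.1 ≠ N.lastAll then
      G v w - G ⟨N.root v.1, h.2.2⟩ w
    else G v w

/-- Step 4 of the K2L algorithm: delete the rows and columns of all roots and interior
vertices, i.e. keep only the non-root boundary vertices. -/
noncomputable def restrictNonRootK (H : Matrix N.VertNotLast N.VertNotLast ℝ) :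
    Matrix N.NonRoot N.NonRoot ℝ :=
  fun v w => H ⟨v.1, N.nonroot_ne_lastAll v.2.1 v.2.2⟩ ⟨w.1, N.nonroot_ne_lastAll w.2.1 w.2.2⟩

/-! ### Auxiliary lemmas for the K2L algorithm -/

theorem c_diag (k : Fin N.n) : N.c k k = 0 := N.c_zero k k (N.graph.loopless.irrefl k)

theorem c_nonneg (k l : Fin N.n) : 0 ≤ N.c k l := by
  by_cases h : N.graph.Adj k l
  · exact (N.c_pos k l h).le
  · rw [N.c_zero k l h]

theorem rowsum (k : Fin N.n) (x : Fin N.n → ℝ) :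
    ∑ l, N.Kmatrix k l * x l = ∑ l, N.c k l * (x k - x l) := by
  have h1 : ∀ l, N.Kmatrix k l * x l
      = (if k = l then (∑ j, N.c k j) * x l else 0) - N.c k l * x l := by
    intro l
    by_cases h : k = l
    · subst h; simp [Kmatrix, N.c_diag k]
    · simp only [Kmatrix, if_neg h]; ring
  calc ∑ l, N.Kmatrix k l * x l
      = ∑ l, ((if k = l then (∑ j, N.c k j) * x l else 0) - N.c k l * x l) :=
        Finset.sum_congr rfl fun l _ => h1 l
    _ = (∑ l, if k = l then (∑ j, N.c k j) * x l else 0) - ∑ l, N.c k l * x l :=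
        Finset.sum_sub_distrib _ _
    _ = (∑ j, N.c k j) * x k - ∑ l, N.c k l * x l := by
        rw [Fintype.sum_ite_eq k (fun l => (∑ j, N.c k j) * x l)]
    _ = ∑ l, N.c k l * (x k - x l) := by
        rw [Finset.sum_mul, ← Finset.sum_sub_distrib]
        exact Finset.sum_congr rfl fun l _ => by ring

theorem sum_split (f : Fin N.n → ℝ) :
    ∑ l, f l = (∑ l : N.VertNotLast, f l.1) + f N.lastAll := by
  rw [← Finset.sum_erase_add Finset.univ f (Finset.mem_univ N.lastAll)]
  congr 1
  exact Finset.sum_subtype _ (fun x => by simp [Finset.mem_erase]) f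

theorem sum_ind (g : N.VertNotLast → ℝ) (a : Fin N.n) :
    ∑ w : N.VertNotLast, (if w.1 = a then g w else 0) =
      if h : a = N.lastAll then 0 else g ⟨a, h⟩ := by
  split_ifs with h
  · subst h
    exact Finset.sum_eq_zero fun w _ => if_neg w.2
  · have he : ∀ w : N.VertNotLast, (if w.1 = a then g w else 0)
        = if w = ⟨a, h⟩ then g w else 0 := by
      intro w
      by_cases hw : w.1 = a
      · rw [if_pos hw, if_pos (Subtype.ext hw)]
      · rw [if_neg hw, if_neg (fun hc => hw (by rw [hc]))]
    rw [Finset.sum_congr rfl fun w _ => he w]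
    exact Fintype.sum_ite_eq' _ g

theorem root_spec {v : Fin N.n} {i : Fin N.p} (hv : v ∈ N.A i) :
    N.root v ∈ N.A i ∧ ∀ u ∈ N.A i, u ≤ N.root v := by
  have h : ∃ j, v ∈ N.A j := ⟨i, hv⟩
  have hji : h.choose = i := by
    by_contra hne
    exact (Finset.disjoint_left.mp (N.A_disjoint _ _ hne) h.choose_spec) hv
  have hAe : N.A h.choose = N.A i := by rw [hji]
  rw [root, dif_pos h]
  constructor
  · exact hAe ▸ (N.A h.choose).max'_mem ⟨v, h.choose_spec⟩
  · intro u hu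
    exact Finset.le_max' _ u (hAe.symm ▸ hu)

theorem root_idem {v : Fin N.n} (hv : v ∈ N.M) : N.root (N.root v) = N.root v := by
  obtain ⟨i, hvi⟩ := N.mem_M_iff.mp hv
  obtain ⟨hr, hub⟩ := N.root_spec hvi
  obtain ⟨hrr, hub2⟩ := N.root_spec hr
  exact le_antisymm (hub _ hrr) (hub2 _ hr)

theorem port_eq_last_of_lastAll {i : Fin N.p} (h : N.lastAll ∈ N.A i) : i = N.lastPort := by
  by_contra hne
  have hle : i ≤ N.lastPort := by
    have hi := i.isLt
    exact Fin.le_def.mpr (by simp only [lastPort]; omega)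
  have hilt : i < N.lastPort := lt_of_le_of_ne hle hne
  obtain ⟨v, hv⟩ := N.A_nonempty N.lastPort
  have hlt := N.A_ordered i N.lastPort N.lastAll v hilt h hv
  have hvle : v ≤ N.lastAll := by
    have hv2 := v.isLt
    exact Fin.le_def.mpr (by simp only [lastAll]; omega)
  exact absurd hlt (not_lt.mpr hvle)

theorem ktilde_isUnit : IsUnit N.Ktilde := by
  rw [Matrix.isUnit_iff_isUnit_det, isUnit_iff_ne_zero, Ne,
    ← Matrix.exists_mulVec_eq_zero_iff]
  rintro ⟨v, hv0, hv⟩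
  apply hv0
  set U : Fin N.n → ℝ := fun w => if h : w = N.lastAll then 0 else v ⟨w, h⟩ with hU
  have hUlast : U N.lastAll = 0 := dif_pos rfl
  have hUv : ∀ (w : Fin N.n) (hw : w ≠ N.lastAll), U w = v ⟨w, hw⟩ := fun w hw => dif_neg hw
  have hrow : ∀ (k : Fin N.n) (_ : k ≠ N.lastAll), ∑ l, N.Kmatrix k l * U l = 0 := by
    intro k hk
    rw [N.sum_split (fun l => N.Kmatrix k l * U l)]
    have h2 : (∑ l : N.VertNotLast, N.Kmatrix k l.1 * U l.1)
        = N.Ktilde.mulVec v ⟨k, hk⟩ := by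
      simp only [Matrix.mulVec, dotProduct, Ktilde]
      exact Finset.sum_congr rfl fun w _ => by rw [hUv w.1 w.2]
    rw [h2, hv]
    simp [hUlast]
  have hQ : ∑ k, ∑ l, N.c k l * (U k - U l) * U k = 0 := by
    have h1 : ∀ k : Fin N.n, ∑ l, N.c k l * (U k - U l) * U k
        = U k * ∑ l, N.Kmatrix k l * U l := by
      intro k
      rw [N.rowsum, Finset.mul_sum]
      exact Finset.sum_congr rfl fun l _ => by ring
    calc ∑ k, ∑ l, N.c k l * (U k - U l) * U k
        = ∑ k, U k * ∑ l, N.Kmatrix k l * U l := Finset.sum_congr rfl fun k _ => h1 k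
      _ = 0 := by
          rw [N.sum_split (fun k => U k * ∑ l, N.Kmatrix k l * U l), hUlast,
            Finset.sum_eq_zero fun w _ => by rw [hrow w.1 w.2, mul_zero]]
          simp
  have hQ' : ∑ k, ∑ l, N.c k l * (U k - U l) * U l = 0 := by
    rw [Finset.sum_comm]
    calc ∑ l, ∑ k, N.c k l * (U k - U l) * U l
        = ∑ l, ∑ k, -(N.c l k * (U l - U k) * U l) :=
          Finset.sum_congr rfl fun l _ => Finset.sum_congr rfl fun k _ => by
            rw [N.c_symm]; ring
      _ = -∑ l, ∑ k, N.c l k * (U l - U k) * U l := by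
          simp [← Finset.sum_neg_distrib]
      _ = 0 := by rw [hQ, neg_zero]
  have hsq : ∀ k l, N.c k l * (U k - U l) ^ 2 = 0 := by
    have hnn : ∀ k l : Fin N.n, 0 ≤ N.c k l * (U k - U l) ^ 2 :=
      fun k l => mul_nonneg (N.c_nonneg k l) (sq_nonneg _)
    have hS : ∑ k, ∑ l, N.c k l * (U k - U l) ^ 2 = 0 := by
      calc ∑ k, ∑ l, N.c k l * (U k - U l) ^ 2
          = ∑ k, ∑ l, (N.c k l * (U k - U l) * U k - N.c k l * (U k - U l) * U l) :=
            Finset.sum_congr rfl fun k _ => Finset.sum_congr rfl fun l _ => by ring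
        _ = 0 := by
            rw [Finset.sum_congr rfl fun k (_ : k ∈ Finset.univ) => Finset.sum_sub_distrib _ _,
              Finset.sum_sub_distrib, hQ, hQ', sub_zero]
    intro k l
    have h1 := (Finset.sum_eq_zero_iff_of_nonneg
      (fun k _ => Finset.sum_nonneg fun l _ => hnn k l)).mp hS k (Finset.mem_univ k)
    exact (Finset.sum_eq_zero_iff_of_nonneg (fun l _ => hnn k l)).mp h1 l (Finset.mem_univ l)
  have hadj : ∀ k l, N.graph.Adj k l → U k = U l := by
    intro k l h
    have hc := N.c_pos k l h
    have h2 : (U k - U l) ^ 2 = 0 := by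
      rcases mul_eq_zero.mp (hsq k l) with h' | h'
      · exact absurd h' (ne_of_gt hc)
      · exact h'
    exact sub_eq_zero.mp (sq_eq_zero_iff.mp h2)
  have hreach : ∀ u w : Fin N.n, N.graph.Reachable u w → U u = U w := by
    intro u w h
    obtain ⟨q⟩ := h
    induction q with
    | nil => rfl
    | cons h' _ ih => exact (hadj _ _ h').trans ih
  have hUc : ∀ u, U u = 0 := fun u => by
    rw [hreach u N.lastAll (N.connected.preconnected u N.lastAll), hUlast]
  funext w
  rw [← hUv w.1 w.2, hUc w.1]
  rfl

end Network

/-- **The K2L algorithm** (Corollary 5.3): the response matrix `L` of a superport network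
is obtained from its Kirchhoff matrix `K` by: removing the last row and column and
inverting; subtracting the column (row) `root k` from the column (row) `k` for each
non-root boundary vertex `k` with `root k` different from the last vertex; deleting the
rows and columns of all roots and all interior vertices distinct from the last vertex;
and inverting the result. -/
theorem response_from_kirchhoff_matrix (N : Network) (hmp : N.p < N.m)
    (L : Matrix N.NonRoot N.NonRoot ℝ) (hL : N.IsResponse L) :
    IsUnit N.Ktilde ∧
    IsUnit (N.restrictNonRootK (N.stepRowK (N.stepColK N.Ktilde⁻¹))) ∧
    L = (N.restrictNonRootK (N.stepRowK (N.stepColK N.Ktilde⁻¹)))⁻¹ := by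
  have hKt : IsUnit N.Ktilde := N.ktilde_isUnit
  have hKd : IsUnit N.Ktilde.det := (Matrix.isUnit_iff_isUnit_det _).mp hKt
  set F := N.Ktilde⁻¹ with hF
  set H' := N.restrictNonRootK (N.stepRowK (N.stepColK F)) with hH'
  have key : L * H' = 1 := by
    ext x y
    have hy_ne : y.1 ≠ N.lastAll := N.nonroot_ne_lastAll y.2.1 y.2.2
    have hry_mem : N.root y.1 ∈ N.M := N.root_mem y.2.1
    set Jt : Fin N.n → ℝ :=
      fun k => (if k = y.1 then 1 else 0) - (if k = N.root y.1 then 1 else 0) with hJt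
    set J : N.VertNotLast → ℝ := fun k => Jt k.1 with hJ
    set Ut := F.mulVec J with hUt
    set U : Fin N.n → ℝ := fun w => if h : w = N.lastAll then 0 else Ut ⟨w, h⟩ with hU
    set I : Fin N.n → Fin N.n → ℝ := fun k l => N.c k l * (U k - U l) with hI
    set ΔU : Fin N.n → ℝ := fun t => U t - U (N.root t) with hΔU
    have hUlast : U N.lastAll = 0 := dif_pos rfl
    have hUv : ∀ (w : Fin N.n) (hw : w ≠ N.lastAll), U w = Ut ⟨w, hw⟩ :=
      fun w hw => dif_neg hw
    have hcur : ∀ (k : Fin N.n), k ≠ N.lastAll → ∑ l, I k l = Jt k := by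
      intro k hk
      have hJJ : Jt k = J ⟨k, hk⟩ := rfl
      rw [hJJ]
      have h1 : ∑ l, I k l = ∑ l, N.Kmatrix k l * U l := (N.rowsum k U).symm
      rw [h1, N.sum_split (fun l => N.Kmatrix k l * U l), hUlast, mul_zero, add_zero]
      have h2 : (∑ l : N.VertNotLast, N.Kmatrix k l.1 * U l.1)
          = N.Ktilde.mulVec Ut ⟨k, hk⟩ := by
        simp only [Matrix.mulVec, dotProduct, Network.Ktilde]
        exact Finset.sum_congr rfl fun w _ => by rw [hUv w.1 w.2]
      rw [h2, hUt, Matrix.mulVec_mulVec, Matrix.mul_nonsing_inv _ hKd, Matrix.one_mulVec]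
    have haxioms : N.Axioms ΔU U I := by
      refine ⟨fun k l => rfl, ?_, ?_, fun k _ _ => rfl⟩
      · intro k hk
        by_cases hkl : k = N.lastAll
        · subst hkl
          have htot : ∑ a, ∑ l, I a l = 0 := by
            have hsum : ∑ a, ∑ l, I a l = -∑ a, ∑ l, I a l := by
              calc ∑ a, ∑ l, I a l = ∑ a, ∑ l, I l a := Finset.sum_comm
                _ = ∑ a, ∑ l, -(I a l) := Finset.sum_congr rfl fun a _ =>
                    Finset.sum_congr rfl fun l _ => by
                      simp only [hI]; rw [N.c_symm]; ring
                _ = -∑ a, ∑ l, I a l := by simp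
            linarith
          have hsplit := N.sum_split (fun a => ∑ l, I a l)
          rw [htot] at hsplit
          have hry_ne : N.root y.1 ≠ N.lastAll := by
            intro hEq; exact hk (hEq ▸ hry_mem)
          have hJs : ∑ a : N.VertNotLast, (∑ l, I a.1 l) = 0 := by
            rw [Finset.sum_congr rfl fun a _ => hcur a.1 a.2]
            simp only [hJt]
            rw [Finset.sum_sub_distrib]
            have e1 : ∑ w : N.VertNotLast, (if w.1 = y.1 then (1:ℝ) else 0) = 1 := by
              rw [N.sum_ind (fun _ => (1:ℝ)) y.1, dif_neg hy_ne]
            have e2 : ∑ w : N.VertNotLast, (if w.1 = N.root y.1 then (1:ℝ) else 0) = 1 := by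
              rw [N.sum_ind (fun _ => (1:ℝ)) (N.root y.1), dif_neg hry_ne]
            rw [e1, e2, sub_self]
          rw [hJs] at hsplit
          linarith
        · rw [hcur k hkl]
          simp only [hJt]
          rw [if_neg (fun h => hk (by rw [h]; exact y.2.1)),
            if_neg (fun h => hk (by rw [h]; exact hry_mem)), sub_self]
      · intro i hi
        have hk_ne : ∀ k ∈ N.A i, k ≠ N.lastAll := by
          intro k hkA hEq
          exact hi (N.port_eq_last_of_lastAll (hEq ▸ hkA))
        rw [Finset.sum_congr rfl fun k hkA => hcur k (hk_ne k hkA)]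
        simp only [hJt]
        rw [Finset.sum_sub_distrib,
          Finset.sum_ite_eq' (N.A i) y.1 (fun _ => (1:ℝ)),
          Finset.sum_ite_eq' (N.A i) (N.root y.1) (fun _ => (1:ℝ))]
        have hiff : y.1 ∈ N.A i ↔ N.root y.1 ∈ N.A i := by
          constructor
          · intro h; exact (N.root_spec h).1
          · intro h
            obtain ⟨j, hj⟩ := N.mem_M_iff.mp y.2.1
            have hrj : N.root y.1 ∈ N.A j := (N.root_spec hj).1
            have hij : i = j := by
              by_contra hne
              exact (Finset.disjoint_left.mp (N.A_disjoint i j hne) h) hrj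
            exact hij ▸ hj
        by_cases hmem : y.1 ∈ N.A i
        · rw [if_pos hmem, if_pos (hiff.mp hmem), sub_self]
        · rw [if_neg hmem, if_neg (fun h => hmem (hiff.mpr h)), sub_self]
    have happ := hL ΔU U I haxioms x
    have hx_ne : x.1 ≠ N.lastAll := N.nonroot_ne_lastAll x.2.1 x.2.2
    have hLHS : ∑ l, I x.1 l = if x = y then (1:ℝ) else 0 := by
      rw [hcur x.1 hx_ne]
      simp only [hJt]
      have hx_ry : x.1 ≠ N.root y.1 := by
        intro hEq
        apply x.2.2
        rw [hEq, N.root_idem y.2.1]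
      rw [if_neg hx_ry, sub_zero]
      by_cases hxy : x = y
      · rw [if_pos (by rw [hxy]), if_pos hxy]
      · rw [if_neg (fun h => hxy (Subtype.ext h)), if_neg hxy]
    have hUtv : ∀ v : N.VertNotLast, Ut v
        = F v ⟨y.1, hy_ne⟩ - (if h : N.root y.1 = N.lastAll then 0 else F v ⟨N.root y.1, h⟩) := by
      intro v
      have hterm : ∀ w : N.VertNotLast,
          F v w * ((if w.1 = y.1 then (1:ℝ) else 0) - (if w.1 = N.root y.1 then 1 else 0))
          = (if w.1 = y.1 then F v w else 0) - (if w.1 = N.root y.1 then F v w else 0) := by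
        intro w
        split_ifs <;> ring
      calc Ut v = ∑ w : N.VertNotLast, F v w * J w := by
            simp only [hUt, Matrix.mulVec, dotProduct]
        _ = ∑ w : N.VertNotLast,
            ((if w.1 = y.1 then F v w else 0) - (if w.1 = N.root y.1 then F v w else 0)) :=
          Finset.sum_congr rfl fun w _ => by rw [hJ]; simp only [hJt]; exact hterm w
        _ = F v ⟨y.1, hy_ne⟩
            - (if h : N.root y.1 = N.lastAll then 0 else F v ⟨N.root y.1, h⟩) := by
          rw [Finset.sum_sub_distrib, N.sum_ind (fun w => F v w) y.1,
            N.sum_ind (fun w => F v w) (N.root y.1), dif_neg hy_ne]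
    have hG : ∀ v : N.VertNotLast, N.stepColK F v ⟨y.1, hy_ne⟩ = Ut v := by
      intro v
      rw [hUtv v]
      simp only [Network.stepColK]
      by_cases h : N.root y.1 = N.lastAll
      · rw [dif_neg (fun hc => hc.2.2 h), dif_pos h, sub_zero]
      · rw [dif_pos ⟨y.2.1, y.2.2, h⟩, dif_neg h]
    have hΔH : ∀ t : N.NonRoot, ΔU t.1 = H' t y := by
      intro t
      have ht_ne : t.1 ≠ N.lastAll := N.nonroot_ne_lastAll t.2.1 t.2.2
      have hH'ty : H' t y = N.stepRowK (N.stepColK F) ⟨t.1, ht_ne⟩ ⟨y.1, hy_ne⟩ := rfl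
      rw [hH'ty]
      simp only [Network.stepRowK, hΔU]
      by_cases h : N.root t.1 = N.lastAll
      · rw [dif_neg (fun hc => hc.2.2 h), hG ⟨t.1, ht_ne⟩, ← hUv t.1 ht_ne, h, hUlast,
          sub_zero]
      · rw [dif_pos ⟨t.2.1, t.2.2, h⟩, hG ⟨t.1, ht_ne⟩, hG ⟨N.root t.1, h⟩,
          ← hUv t.1 ht_ne, ← hUv (N.root t.1) h]
    rw [Matrix.mul_apply]
    have hsum : ∑ t : N.NonRoot, L x t * H' t y = ∑ t : N.NonRoot, L x t * ΔU t.1 :=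
      Finset.sum_congr rfl fun t _ => by rw [hΔH t]
    rw [hsum, ← happ, hLHS, Matrix.one_apply]
  have key' : H' * L = 1 := mul_eq_one_comm.mp key
  exact ⟨hKt, ⟨⟨H', L, key', key⟩, rfl⟩, (Matrix.inv_eq_right_inv key').symm⟩

end Superport
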